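/- Let (F_n) be a uniformly bounded sequence of functions on S × S and let ℙ_s be the product-of-Markov measure on Σ_m built from the transfer-operator Markov chain (π, (p_{i,j})) placed independently on each dyadic block Λ_i. Then for ℙ_s-almost every x, (1/n) Σ_{k=1}^n (F_k(x_k, x_{2k}) − 𝔼_{ℙ_s}[F_k(x_k, x_{2k})]) → 0. -/

import Mathlib

open MeasureTheory Filter Finset

namespace LLNAux

lemma op_odd' {i : ℕ} (hi : Odd i) : ordCompl[2] i = i := by
  have h2 : ¬ (2 ∣ i) := by rw [Nat.two_dvd_ne_zero, ← Nat.odd_iff]; exact hi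
  simp [Nat.factorization_eq_zero_of_not_dvd h2]

lemma op_pow (j : ℕ) : ordCompl[2] (2 ^ j) = 1 := by
  have : (2 ^ j : ℕ).factorization 2 = j := by
    simp [Nat.Prime.factorization_pow Nat.prime_two]
  rw [this, Nat.div_self (Nat.pow_pos (n := j) (by norm_num))]

lemma op_mul_pow {i : ℕ} (j : ℕ) (hi : Odd i) : ordCompl[2] (i * 2 ^ j) = i := by
  rw [Nat.ordCompl_mul, op_pow, op_odd' hi, mul_one]

lemma op_two_mul (k : ℕ) : ordCompl[2] (2 * k) = ordCompl[2] k := by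
  have h2 : ordCompl[2] 2 = 1 := by
    have := op_pow 1; simpa using this
  rw [Nat.ordCompl_mul, h2, one_mul]

lemma odd_op {n : ℕ} (hn : n ≠ 0) : Odd (ordCompl[2] n) := by
  rw [Nat.odd_iff, ← Nat.two_dvd_ne_zero]
  exact Nat.not_dvd_ordCompl Nat.prime_two hn

lemma op_pos {n : ℕ} (hn : n ≠ 0) : 1 ≤ ordCompl[2] n := Nat.ordCompl_pos 2 hn

lemma op_le (n : ℕ) : ordCompl[2] n ≤ n := Nat.div_le_self _ _

lemma card_same_op_le (n d : ℕ) :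
    ((Finset.Icc 1 n).filter (fun k => ordCompl[2] k = d)).card ≤ Nat.log 2 n + 1 := by
  classical
  have h : ((Finset.Icc 1 n).filter (fun k => ordCompl[2] k = d)).card
      ≤ (Finset.range (Nat.log 2 n + 1)).card := by
    apply Finset.card_le_card_of_injOn (fun k => k.factorization 2)
    · intro k hk
      simp only [Finset.mem_coe, Finset.mem_filter, Finset.mem_Icc] at hk
      obtain ⟨⟨hk1, hkn⟩, _⟩ := hk
      simp only [Finset.mem_coe, Finset.mem_range, Nat.lt_succ_iff]
      have h1 : 2 ^ (k.factorization 2) ≤ k := Nat.le_of_dvd (by omega) (Nat.ordProj_dvd k 2)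
      exact Nat.le_log_of_pow_le (by norm_num) (le_trans h1 hkn)
    · intro a ha b hb hab
      simp only [Finset.coe_filter, Set.mem_setOf_eq, Finset.mem_Icc] at ha hb
      have h1 := Nat.ordProj_mul_ordCompl_eq_self a 2
      have h2 := Nat.ordProj_mul_ordCompl_eq_self b 2
      dsimp only at hab
      rw [← h1, ← h2]
      rw [hab] at ha ⊢
      rw [ha.2, hb.2]
  simpa using h

end LLNAux
namespace LLNAux2

lemma indep_pair
    (m : ℕ) (hm : 2 ≤ m) (φ : Fin m → Fin m → ℝ) (s : ℝ)
    (t : Fin m → ℝ) (ht : ∀ i, 0 < t i)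
    (Ps : Measure (ℕ → Fin m)) (hprob : IsProbabilityMeasure Ps)
    (hPs : ∀ (n : ℕ) (a : ℕ → Fin m),
      Ps {x | ∀ k ∈ Icc 1 n, x k = a k} = ENNReal.ofReal
        (∏ i ∈ (Icc 1 n).filter (fun i => Odd i),
          ((t (a i) / ∑ j, t j) *
            ∏ j ∈ (Finset.range (n + 1)).filter (fun j => i * 2 ^ (j + 1) ≤ n),
              Real.exp (s * φ (a (i * 2 ^ j)) (a (i * 2 ^ (j + 1)))) *
                t (a (i * 2 ^ (j + 1))) / (t (a (i * 2 ^ j))) ^ 2)))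
    (N j k : ℕ) (hj1 : 1 ≤ j) (hjN : 2 * j ≤ N) (hk1 : 1 ≤ k) (hkN : 2 * k ≤ N)
    (hop : ordCompl[2] j ≠ ordCompl[2] k)
    (f g : Fin m → Fin m → ℝ) :
    ∫ x, f (x j) (x (2 * j)) * g (x k) (x (2 * k)) ∂Ps
      = (∫ x, f (x j) (x (2 * j)) ∂Ps) * ∫ x, g (x k) (x (2 * k)) ∂Ps := by
  have d0 : Fin m := ⟨0, by omega⟩
  set A : Finset ℕ := Icc 1 N with hA
  let I := {i // i ∈ A}
  let ρ : (ℕ → Fin m) → (I → Fin m) := fun x i => x i.1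
  have hρ : Measurable ρ := measurable_pi_lambda _ (fun i => measurable_pi_apply i.1)
  let ext : (I → Fin m) → (ℕ → Fin m) := fun v n => if h : n ∈ A then v ⟨n, h⟩ else d0
  let w : ℕ → (ℕ → Fin m) → ℝ := fun i a =>
    (t (a i) / ∑ j, t j) *
      ∏ l ∈ (Finset.range (N + 1)).filter (fun l => i * 2 ^ (l + 1) ≤ N),
        Real.exp (s * φ (a (i * 2 ^ l)) (a (i * 2 ^ (l + 1)))) *
          t (a (i * 2 ^ (l + 1))) / (t (a (i * 2 ^ l))) ^ 2
  let O : Finset ℕ := A.filter (fun i => Odd i)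
  let Q : (I → Fin m) → ℝ := fun v => ∏ i ∈ O, w i (ext v)
  have hw0 : ∀ i a, 0 ≤ w i a := by
    intro i a
    apply mul_nonneg
    · apply div_nonneg (ht _).le
      exact Finset.sum_nonneg fun _ _ => (ht _).le
    · apply Finset.prod_nonneg
      intro l _
      exact div_nonneg (mul_nonneg (Real.exp_pos _).le (ht _).le) (sq_nonneg _)
  have hQ0 : ∀ v, 0 ≤ Q v := fun v => Finset.prod_nonneg fun i _ => hw0 i _
  have hcyl : ∀ v : I → Fin m, ρ ⁻¹' {v} = {x | ∀ i ∈ A, x i = ext v i} := by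
    intro v
    ext x
    simp only [Set.mem_preimage, Set.mem_singleton_iff, funext_iff, Set.mem_setOf_eq]
    constructor
    · intro h i hi
      simp only [ext, dif_pos hi]
      exact h ⟨i, hi⟩
    · intro h i
      have := h i.1 i.2
      simpa only [ext, dif_pos i.2] using this
  have hmeas_cyl : ∀ v, Ps (ρ ⁻¹' {v}) = ENNReal.ofReal (Q v) := by
    intro v
    rw [hcyl v]
    exact hPs N (ext v)
  let μ := Ps.map ρ
  have hμ : ∀ v, μ {v} = ENNReal.ofReal (Q v) := by
    intro v
    rw [Measure.map_apply hρ (measurableSet_singleton v)]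
    exact hmeas_cyl v
  have key : ∀ H : (I → Fin m) → ℝ, ∫ x, H (ρ x) ∂Ps = ∑ v, H v * Q v := by
    intro H
    haveI : IsProbabilityMeasure μ := Measure.isProbabilityMeasure_map hρ.aemeasurable
    rw [← integral_map hρ.aemeasurable ((measurable_of_countable H).aestronglyMeasurable)]
    rw [integral_fintype (Integrable.of_finite)]
    apply Finset.sum_congr rfl
    intro v _
    rw [measureReal_def, hμ v, ENNReal.toReal_ofReal (hQ0 v), smul_eq_mul, mul_comm]
  have hjA : j ∈ A := by rw [hA, Finset.mem_Icc]; omega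
  have h2jA : 2 * j ∈ A := by rw [hA, Finset.mem_Icc]; omega
  have hkA : k ∈ A := by rw [hA, Finset.mem_Icc]; omega
  have h2kA : 2 * k ∈ A := by rw [hA, Finset.mem_Icc]; omega
  set i₀ : ℕ := ordCompl[2] j with hi₀
  have hi₀O : i₀ ∈ O := by
    rw [Finset.mem_filter, hA, Finset.mem_Icc]
    refine ⟨⟨LLNAux.op_pos (by omega), le_trans (LLNAux.op_le j) (by omega)⟩, LLNAux.odd_op (by omega)⟩
  classical
  let p : I → Prop := fun i => ordCompl[2] i.1 = i₀
  let e := Equiv.piEquivPiSubtypeProd p (fun _ : I => Fin m)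
  have hw_congr : ∀ i ∈ O, ∀ a a' : ℕ → Fin m,
      (∀ n, n ∈ A → ordCompl[2] n = i → a n = a' n) → w i a = w i a' := by
    intro i hiO a a' hagree
    obtain ⟨hiA, hodd⟩ := Finset.mem_filter.mp hiO
    rw [hA, Finset.mem_Icc] at hiA
    have h0 : a i = a' i := hagree i (by rw [hA, Finset.mem_Icc]; omega) (LLNAux.op_odd' hodd)
    show (t (a i) / ∑ j, t j) * _ = (t (a' i) / ∑ j, t j) * _
    rw [h0]
    congr 1
    apply Finset.prod_congr rfl
    intro l hl
    have hl2 : i * 2 ^ (l + 1) ≤ N := (Finset.mem_filter.mp hl).2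
    have hpow : i * 2 ^ l ≤ i * 2 ^ (l + 1) :=
      Nat.mul_le_mul_left i (Nat.pow_le_pow_right (by norm_num) (by omega))
    have hipos : 1 ≤ i * 2 ^ l := Nat.one_le_iff_ne_zero.mpr
      (Nat.mul_ne_zero (by omega) (Nat.pos_iff_ne_zero.mp (Nat.pow_pos (n := l) (by norm_num))))
    have hc1 : a (i * 2 ^ l) = a' (i * 2 ^ l) :=
      hagree _ (by rw [hA, Finset.mem_Icc]; omega) (LLNAux.op_mul_pow l hodd)
    have hc2 : a (i * 2 ^ (l + 1)) = a' (i * 2 ^ (l + 1)) :=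
      hagree _ (by rw [hA, Finset.mem_Icc]; omega) (LLNAux.op_mul_pow (l + 1) hodd)
    rw [hc1, hc2]
  let W : (∀ i : {x : I // p x}, Fin m) → ℝ := fun v1 => w i₀ (ext (e.symm (v1, fun _ => d0)))
  let R : (∀ i : {x : I // ¬ p x}, Fin m) → ℝ := fun v2 =>
    ∏ i ∈ O.erase i₀, w i (ext (e.symm (fun _ => d0, v2)))
  have hsplitQ : ∀ v1 v2, Q (e.symm (v1, v2)) = W v1 * R v2 := by
    intro v1 v2
    have h1 : w i₀ (ext (e.symm (v1, v2))) = W v1 := by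
      apply hw_congr i₀ hi₀O
      intro n hnA hopn
      simp only [ext, dif_pos hnA]
      have hp : p ⟨n, hnA⟩ := hopn
      rw [Equiv.piEquivPiSubtypeProd_symm_apply, Equiv.piEquivPiSubtypeProd_symm_apply,
        dif_pos hp, dif_pos hp]
    have h2 : ∀ i ∈ O.erase i₀, w i (ext (e.symm (v1, v2)))
        = w i (ext (e.symm (fun _ => d0, v2))) := by
      intro i hi
      obtain ⟨hne, hiO⟩ := Finset.mem_erase.mp hi
      apply hw_congr i hiO
      intro n hnA hopn
      simp only [ext, dif_pos hnA]
      have hnp : ¬ p ⟨n, hnA⟩ := by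
        intro hp
        exact hne (by rw [← hopn]; exact hp)
      rw [Equiv.piEquivPiSubtypeProd_symm_apply, Equiv.piEquivPiSubtypeProd_symm_apply,
        dif_neg hnp, dif_neg hnp]
    calc Q (e.symm (v1, v2))
        = w i₀ (ext (e.symm (v1, v2))) * ∏ i ∈ O.erase i₀, w i (ext (e.symm (v1, v2))) :=
          (Finset.mul_prod_erase O _ hi₀O).symm
      _ = W v1 * R v2 := by
          rw [h1]
          congr 1
          exact Finset.prod_congr rfl h2
  have hpj : p ⟨j, hjA⟩ := rfl
  have hp2j : p ⟨2 * j, h2jA⟩ := by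
    show ordCompl[2] (2 * j) = i₀
    rw [LLNAux.op_two_mul, hi₀]
  have hpk : ¬ p ⟨k, hkA⟩ := fun h => hop h.symm
  have hp2k : ¬ p ⟨2 * k, h2kA⟩ := by
    intro h
    rw [show p ⟨2 * k, h2kA⟩ = (ordCompl[2] (2 * k) = i₀) from rfl, LLNAux.op_two_mul] at h
    exact hop h.symm
  have hcj : ∀ v1 v2, (e.symm (v1, v2)) ⟨j, hjA⟩ = v1 ⟨⟨j, hjA⟩, hpj⟩ := by
    intro v1 v2
    rw [Equiv.piEquivPiSubtypeProd_symm_apply, dif_pos hpj]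
  have hc2j : ∀ v1 v2, (e.symm (v1, v2)) ⟨2 * j, h2jA⟩ = v1 ⟨⟨2 * j, h2jA⟩, hp2j⟩ := by
    intro v1 v2
    rw [Equiv.piEquivPiSubtypeProd_symm_apply, dif_pos hp2j]
  have hck : ∀ v1 v2, (e.symm (v1, v2)) ⟨k, hkA⟩ = v2 ⟨⟨k, hkA⟩, hpk⟩ := by
    intro v1 v2
    rw [Equiv.piEquivPiSubtypeProd_symm_apply, dif_neg hpk]
  have hc2k : ∀ v1 v2, (e.symm (v1, v2)) ⟨2 * k, h2kA⟩ = v2 ⟨⟨2 * k, h2kA⟩, hp2k⟩ := by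
    intro v1 v2
    rw [Equiv.piEquivPiSubtypeProd_symm_apply, dif_neg hp2k]
  let F1 : (∀ i : {x : I // p x}, Fin m) → ℝ := fun v1 =>
    f (v1 ⟨⟨j, hjA⟩, hpj⟩) (v1 ⟨⟨2 * j, h2jA⟩, hp2j⟩)
  let G2 : (∀ i : {x : I // ¬ p x}, Fin m) → ℝ := fun v2 =>
    g (v2 ⟨⟨k, hkA⟩, hpk⟩) (v2 ⟨⟨2 * k, h2kA⟩, hp2k⟩)
  have hsum : ∀ H : (I → Fin m) → ℝ,
      ∑ v, H v * Q v = ∑ v1, ∑ v2, H (e.symm (v1, v2)) * (W v1 * R v2) := by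
    intro H
    rw [← Equiv.sum_comp e.symm (fun v => H v * Q v), Fintype.sum_prod_type]
    apply Finset.sum_congr rfl
    intro v1 _
    apply Finset.sum_congr rfl
    intro v2 _
    rw [hsplitQ v1 v2]
  -- the four integrals
  have h1 : ∫ x, f (x j) (x (2 * j)) * g (x k) (x (2 * k)) ∂Ps
      = (∑ v1, F1 v1 * W v1) * (∑ v2, G2 v2 * R v2) := by
    have hk1' := key (fun v => f (v ⟨j, hjA⟩) (v ⟨2 * j, h2jA⟩) * g (v ⟨k, hkA⟩) (v ⟨2 * k, h2kA⟩))
    rw [show (∫ x, f (x j) (x (2 * j)) * g (x k) (x (2 * k)) ∂Ps)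
        = ∫ x, f (ρ x ⟨j, hjA⟩) (ρ x ⟨2 * j, h2jA⟩) * g (ρ x ⟨k, hkA⟩) (ρ x ⟨2 * k, h2kA⟩) ∂Ps from rfl]
    rw [hk1', hsum, Finset.sum_mul_sum]
    apply Finset.sum_congr rfl
    intro v1 _
    apply Finset.sum_congr rfl
    intro v2 _
    rw [hcj v1 v2, hc2j v1 v2, hck v1 v2, hc2k v1 v2]
    show F1 v1 * G2 v2 * (W v1 * R v2) = F1 v1 * W v1 * (G2 v2 * R v2)
    ring
  have h2 : ∫ x, f (x j) (x (2 * j)) ∂Ps = (∑ v1, F1 v1 * W v1) * (∑ v2, R v2) := by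
    have hk1' := key (fun v => f (v ⟨j, hjA⟩) (v ⟨2 * j, h2jA⟩))
    rw [show (∫ x, f (x j) (x (2 * j)) ∂Ps)
        = ∫ x, f (ρ x ⟨j, hjA⟩) (ρ x ⟨2 * j, h2jA⟩) ∂Ps from rfl]
    rw [hk1', hsum, Finset.sum_mul_sum]
    apply Finset.sum_congr rfl
    intro v1 _
    apply Finset.sum_congr rfl
    intro v2 _
    rw [hcj v1 v2, hc2j v1 v2]
    show F1 v1 * (W v1 * R v2) = F1 v1 * W v1 * R v2
    ring
  have h3 : ∫ x, g (x k) (x (2 * k)) ∂Ps = (∑ v1, W v1) * (∑ v2, G2 v2 * R v2) := by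
    have hk1' := key (fun v => g (v ⟨k, hkA⟩) (v ⟨2 * k, h2kA⟩))
    rw [show (∫ x, g (x k) (x (2 * k)) ∂Ps)
        = ∫ x, g (ρ x ⟨k, hkA⟩) (ρ x ⟨2 * k, h2kA⟩) ∂Ps from rfl]
    rw [hk1', hsum, Finset.sum_mul_sum]
    apply Finset.sum_congr rfl
    intro v1 _
    apply Finset.sum_congr rfl
    intro v2 _
    rw [hck v1 v2, hc2k v1 v2]
    show G2 v2 * (W v1 * R v2) = W v1 * (G2 v2 * R v2)
    ring
  have h4 : (∑ v1, W v1) * (∑ v2, R v2) = 1 := by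
    calc (∑ v1, W v1) * (∑ v2, R v2)
        = ∑ v1, ∑ v2, (fun _ : I → Fin m => (1 : ℝ)) (e.symm (v1, v2)) * (W v1 * R v2) := by
          rw [Finset.sum_mul_sum]
          apply Finset.sum_congr rfl
          intro v1 _
          apply Finset.sum_congr rfl
          intro v2 _
          ring
      _ = ∑ v, (fun _ : I → Fin m => (1 : ℝ)) v * Q v := (hsum (fun _ => 1)).symm
      _ = ∫ _, (1 : ℝ) ∂Ps := (key _).symm
      _ = 1 := by simp
  rw [h1, h2, h3]
  calc (∑ v1, F1 v1 * W v1) * (∑ v2, G2 v2 * R v2)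
      = ((∑ v1, F1 v1 * W v1) * (∑ v2, G2 v2 * R v2)) * ((∑ v1, W v1) * (∑ v2, R v2)) := by
        rw [h4, mul_one]
    _ = (∑ v1, F1 v1 * W v1) * (∑ v2, R v2) * ((∑ v1, W v1) * (∑ v2, G2 v2 * R v2)) := by
        ring

end LLNAux2

set_option maxHeartbeats 1000000 in
theorem lln_multiple_averages_product_markov
    (m : ℕ) (hm : 2 ≤ m) (φ : Fin m → Fin m → ℝ) (s : ℝ)
    (t : Fin m → ℝ) (ht : ∀ i, 0 < t i)
    (heq : ∀ i, (t i) ^ 2 = ∑ j, Real.exp (s * φ i j) * t j)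
    (Ps : Measure (ℕ → Fin m)) (hprob : IsProbabilityMeasure Ps)
    (hPs : ∀ (n : ℕ) (a : ℕ → Fin m),
      Ps {x | ∀ k ∈ Icc 1 n, x k = a k} = ENNReal.ofReal
        (∏ i ∈ (Icc 1 n).filter (fun i => Odd i),
          ((t (a i) / ∑ j, t j) *
            ∏ j ∈ (Finset.range (n + 1)).filter (fun j => i * 2 ^ (j + 1) ≤ n),
              Real.exp (s * φ (a (i * 2 ^ j)) (a (i * 2 ^ (j + 1)))) *
                t (a (i * 2 ^ (j + 1))) / (t (a (i * 2 ^ j))) ^ 2)))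
    (F : ℕ → Fin m → Fin m → ℝ) (C : ℝ)
    (hF : ∀ n a b, |F n a b| ≤ C) :
    ∀ᵐ x ∂Ps, Tendsto
      (fun n : ℕ => (n : ℝ)⁻¹ * ∑ k ∈ Icc 1 n,
        (F k (x k) (x (2 * k)) - ∫ y, F k (y k) (y (2 * k)) ∂Ps))
      atTop (nhds 0) := by
  classical
  have d0 : Fin m := ⟨0, by omega⟩
  have hC0 : 0 ≤ C := le_trans (abs_nonneg _) (hF 0 d0 d0)
  set X : ℕ → (ℕ → Fin m) → ℝ :=
    fun k x => F k (x k) (x (2 * k)) - ∫ y, F k (y k) (y (2 * k)) ∂Ps with hXdef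
  have hmF : ∀ k : ℕ, Measurable fun x : ℕ → Fin m => F k (x k) (x (2 * k)) := by
    intro k
    have h1 : Measurable fun x : ℕ → Fin m => (x k, x (2 * k)) :=
      (measurable_pi_apply k).prodMk (measurable_pi_apply (2 * k))
    have h2 : Measurable fun pr : Fin m × Fin m => F k pr.1 pr.2 := measurable_of_countable _
    exact h2.comp h1
  have hmX : ∀ k, Measurable (X k) := fun k => (hmF k).sub measurable_const
  have hIb : ∀ k : ℕ, |∫ y, F k (y k) (y (2 * k)) ∂Ps| ≤ C := by
    intro k
    rw [← Real.norm_eq_abs]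
    have := norm_integral_le_of_norm_le_const (μ := Ps)
      (f := fun y : ℕ → Fin m => F k (y k) (y (2 * k))) (C := C)
      (ae_of_all _ fun y => by rw [Real.norm_eq_abs]; exact hF k _ _)
    simpa [measure_univ] using this
  have hbX : ∀ k x, |X k x| ≤ 2 * C := by
    intro k x
    have h1 := hF k (x k) (x (2 * k))
    have h2 := hIb k
    calc |X k x| ≤ |F k (x k) (x (2 * k))| + |∫ y, F k (y k) (y (2 * k)) ∂Ps| := abs_sub _ _
      _ ≤ 2 * C := by linarith
  have hintF : ∀ k, Integrable (fun x : ℕ → Fin m => F k (x k) (x (2 * k))) Ps := fun k =>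
    Integrable.mono' (integrable_const C) (hmF k).aestronglyMeasurable
      (ae_of_all _ fun x => by rw [Real.norm_eq_abs]; exact hF k _ _)
  have hintX : ∀ k, Integrable (X k) Ps := fun k => (hintF k).sub (integrable_const _)
  have hintP : ∀ j k, Integrable (fun x => X j x * X k x) Ps := by
    intro j k
    refine Integrable.mono' (integrable_const (2 * C * (2 * C)))
      ((hmX j).mul (hmX k)).aestronglyMeasurable (ae_of_all _ fun x => ?_)
    rw [Real.norm_eq_abs, abs_mul]
    exact mul_le_mul (hbX j x) (hbX k x) (abs_nonneg _) (by linarith)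
  have hEb : ∀ j k, |∫ x, X j x * X k x ∂Ps| ≤ 4 * C ^ 2 := by
    intro j k
    rw [← Real.norm_eq_abs]
    have := norm_integral_le_of_norm_le_const (μ := Ps)
      (f := fun x => X j x * X k x) (C := 4 * C ^ 2)
      (ae_of_all _ fun x => by
        rw [Real.norm_eq_abs, abs_mul]
        nlinarith [hbX j x, hbX k x, abs_nonneg (X j x), abs_nonneg (X k x)])
    simpa [measure_univ] using this
  have hcov : ∀ j k, 1 ≤ j → 1 ≤ k → ordCompl[2] j ≠ ordCompl[2] k →
      ∫ x, X j x * X k x ∂Ps = 0 := by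
    intro j k hj hk hopjk
    have hkey := LLNAux2.indep_pair m hm φ s t ht Ps hprob hPs (max (2 * j) (2 * k)) j k hj
      (le_max_left _ _) hk (le_max_right _ _) hopjk (F j) (F k)
    set Ij := ∫ y, F j (y j) (y (2 * j)) ∂Ps with hIj
    set Ik := ∫ y, F k (y k) (y (2 * k)) ∂Ps with hIk
    have hintjk : Integrable (fun x : ℕ → Fin m =>
        F j (x j) (x (2 * j)) * F k (x k) (x (2 * k))) Ps := by
      refine Integrable.mono' (integrable_const (C * C))
        ((hmF j).mul (hmF k)).aestronglyMeasurable (ae_of_all _ fun x => ?_)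
      rw [Real.norm_eq_abs, abs_mul]
      exact mul_le_mul (hF j _ _) (hF k _ _) (abs_nonneg _) hC0
    have hexp : (fun x => X j x * X k x) = fun x =>
        (F j (x j) (x (2 * j)) * F k (x k) (x (2 * k)) - Ij * F k (x k) (x (2 * k)))
          - (Ik * F j (x j) (x (2 * j)) - Ij * Ik) := by
      funext x
      simp only [X, hIj, hIk]
      ring
    have i3 : Integrable (fun x : ℕ → Fin m => Ij * F k (x k) (x (2 * k))) Ps :=
      (hintF k).const_mul Ij
    have i4 : Integrable (fun x : ℕ → Fin m => Ik * F j (x j) (x (2 * j))) Ps :=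
      (hintF j).const_mul Ik
    have i5 : Integrable (fun _ : ℕ → Fin m => Ij * Ik) Ps := integrable_const _
    have i1 : Integrable (fun x : ℕ → Fin m =>
        F j (x j) (x (2 * j)) * F k (x k) (x (2 * k)) - Ij * F k (x k) (x (2 * k))) Ps :=
      hintjk.sub i3
    have i2 : Integrable (fun x : ℕ → Fin m =>
        Ik * F j (x j) (x (2 * j)) - Ij * Ik) Ps := i4.sub i5
    rw [hexp, integral_sub i1 i2, integral_sub hintjk i3, integral_sub i4 i5,
      integral_const_mul, integral_const_mul, integral_const, hkey]
    simp only [measure_univ, probReal_univ, ENNReal.toReal_one, one_smul, ← hIj, ← hIk]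
    ring
  have hvar : ∀ n : ℕ, ∫ x, (∑ k ∈ Icc 1 n, X k x) ^ 2 ∂Ps
      ≤ 4 * C ^ 2 * n * ((Nat.log 2 n : ℝ) + 1) := by
    intro n
    have hexp : (fun x => (∑ k ∈ Icc 1 n, X k x) ^ 2)
        = fun x => ∑ j ∈ Icc 1 n, ∑ k ∈ Icc 1 n, X j x * X k x := by
      funext x
      rw [sq, Finset.sum_mul_sum]
    rw [hexp, integral_finset_sum _ (fun j _ => integrable_finset_sum _ (fun k _ => hintP j k))]
    have hrow : ∀ j ∈ Icc 1 n, ∫ x, ∑ k ∈ Icc 1 n, X j x * X k x ∂Ps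
        ≤ 4 * C ^ 2 * ((Nat.log 2 n : ℝ) + 1) := by
      intro j hj
      rw [integral_finset_sum _ (fun k _ => hintP j k),
        ← Finset.sum_filter_add_sum_filter_not (Icc 1 n) (fun k => ordCompl[2] k = ordCompl[2] j)]
      have hz : ∑ k ∈ (Icc 1 n).filter (fun k => ¬ ordCompl[2] k = ordCompl[2] j),
          ∫ x, X j x * X k x ∂Ps = 0 := by
        apply Finset.sum_eq_zero
        intro k hk
        obtain ⟨hk1, hne⟩ := Finset.mem_filter.mp hk
        exact hcov j k (Finset.mem_Icc.mp hj).1 (Finset.mem_Icc.mp hk1).1 (fun h => hne h.symm)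
      rw [hz, add_zero]
      have hcard : (((Icc 1 n).filter (fun k => ordCompl[2] k = ordCompl[2] j)).card : ℝ)
          ≤ (Nat.log 2 n : ℝ) + 1 := by
        exact_mod_cast LLNAux.card_same_op_le n (ordCompl[2] j)
      calc ∑ k ∈ (Icc 1 n).filter (fun k => ordCompl[2] k = ordCompl[2] j),
            ∫ x, X j x * X k x ∂Ps
          ≤ ∑ _k ∈ (Icc 1 n).filter (fun k => ordCompl[2] k = ordCompl[2] j), 4 * C ^ 2 :=
            Finset.sum_le_sum (fun k _ => (abs_le.mp (hEb j k)).2)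
        _ = (((Icc 1 n).filter (fun k => ordCompl[2] k = ordCompl[2] j)).card : ℝ) * (4 * C ^ 2) := by
            rw [Finset.sum_const, nsmul_eq_mul]
        _ ≤ ((Nat.log 2 n : ℝ) + 1) * (4 * C ^ 2) := by
            apply mul_le_mul_of_nonneg_right hcard (by positivity)
        _ = 4 * C ^ 2 * ((Nat.log 2 n : ℝ) + 1) := by ring
    calc ∑ j ∈ Icc 1 n, ∫ x, ∑ k ∈ Icc 1 n, X j x * X k x ∂Ps
        ≤ ∑ _j ∈ Icc 1 n, 4 * C ^ 2 * ((Nat.log 2 n : ℝ) + 1) := Finset.sum_le_sum hrow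
      _ = (n : ℝ) * (4 * C ^ 2 * ((Nat.log 2 n : ℝ) + 1)) := by
          rw [Finset.sum_const, nsmul_eq_mul, Nat.card_Icc]
          norm_num
      _ = 4 * C ^ 2 * n * ((Nat.log 2 n : ℝ) + 1) := by ring
  set S : ℕ → (ℕ → Fin m) → ℝ := fun n x => ∑ k ∈ Icc 1 n, X k x with hSdef
  set Y : ℕ → (ℕ → Fin m) → ℝ := fun q x => ((q ^ 4 : ℕ) : ℝ)⁻¹ * S (q ^ 4) x with hYdef
  have hmS : ∀ n, Measurable (S n) := fun n => Finset.measurable_sum _ (fun k _ => hmX k)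
  have hmY2 : ∀ q, Measurable (fun x => (Y q x) ^ 2) :=
    fun q => ((hmS (q ^ 4)).const_mul _).pow_const 2
  have hbS : ∀ n x, |S n x| ≤ (n : ℝ) * (2 * C) := by
    intro n x
    calc |S n x| ≤ ∑ k ∈ Icc 1 n, |X k x| := Finset.abs_sum_le_sum_abs _ _
      _ ≤ ∑ _k ∈ Icc 1 n, 2 * C := Finset.sum_le_sum fun k _ => hbX k x
      _ = (n : ℝ) * (2 * C) := by rw [Finset.sum_const, nsmul_eq_mul, Nat.card_Icc]; norm_num
  have hbY : ∀ q x, |Y q x| ≤ 2 * C := by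
    intro q x
    rcases Nat.eq_zero_or_pos q with h | h
    · subst h
      simp only [Y, S]
      norm_num
      linarith
    · have hq4 : (0 : ℝ) < ((q ^ 4 : ℕ) : ℝ) := by positivity
      rw [hYdef]
      simp only
      rw [abs_mul, abs_inv, abs_of_pos hq4]
      calc ((q ^ 4 : ℕ) : ℝ)⁻¹ * |S (q ^ 4) x|
          ≤ ((q ^ 4 : ℕ) : ℝ)⁻¹ * (((q ^ 4 : ℕ) : ℝ) * (2 * C)) := by
            apply mul_le_mul_of_nonneg_left (hbS _ x) (by positivity)
        _ = 2 * C := by field_simp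
  have hintY2 : ∀ q, Integrable (fun x => (Y q x) ^ 2) Ps := by
    intro q
    refine Integrable.mono' (integrable_const ((2 * C) ^ 2)) (hmY2 q).aestronglyMeasurable
      (ae_of_all _ fun x => ?_)
    rw [Real.norm_eq_abs, abs_pow, ← sq_abs]
    exact pow_le_pow_left₀ (abs_nonneg _) (by simpa using hbY q x) 2
  have hEY : ∀ q : ℕ, ∫ x, (Y q x) ^ 2 ∂Ps ≤ 36 * C ^ 2 / (q : ℝ) ^ 3 := by
    intro q
    rcases Nat.eq_zero_or_pos q with h | h
    · subst h
      have hz : (fun x : ℕ → Fin m => (Y 0 x) ^ 2) = fun _ => 0 := by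
        funext x
        simp [Y, S]
      rw [hz]
      simp
    · have hq1 : (1 : ℝ) ≤ (q : ℝ) := by exact_mod_cast h
      have hqR : (0 : ℝ) < (q : ℝ) := by linarith
      have h1 : (fun x => (Y q x) ^ 2)
          = fun x => (((q ^ 4 : ℕ) : ℝ)⁻¹) ^ 2 * (S (q ^ 4) x) ^ 2 := by
        funext x
        rw [hYdef]
        simp only
        ring
      rw [h1, integral_const_mul]
      have hlog : (Nat.log 2 (q ^ 4) : ℝ) + 1 ≤ 9 * (q : ℝ) := by
        have ha : q < 2 ^ (Nat.log 2 q + 1) := Nat.lt_pow_succ_log_self (by norm_num) q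
        have hb : q ^ 4 < 2 ^ (4 * (Nat.log 2 q + 1)) := by
          calc q ^ 4 < (2 ^ (Nat.log 2 q + 1)) ^ 4 := Nat.pow_lt_pow_left ha (by norm_num)
            _ = 2 ^ (4 * (Nat.log 2 q + 1)) := by rw [← pow_mul, mul_comm]
        have hc : Nat.log 2 (q ^ 4) < 4 * (Nat.log 2 q + 1) :=
          Nat.log_lt_of_lt_pow (pow_ne_zero _ (by omega)) hb
        have hd : Nat.log 2 q ≤ q := Nat.log_le_self 2 q
        have he : Nat.log 2 (q ^ 4) + 1 ≤ 9 * q := by omega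
        exact_mod_cast he
      have hcast : ((q ^ 4 : ℕ) : ℝ) = (q : ℝ) ^ 4 := by push_cast; ring
      calc (((q ^ 4 : ℕ) : ℝ)⁻¹) ^ 2 * ∫ x, (S (q ^ 4) x) ^ 2 ∂Ps
          ≤ (((q ^ 4 : ℕ) : ℝ)⁻¹) ^ 2
              * (4 * C ^ 2 * ((q ^ 4 : ℕ) : ℝ) * ((Nat.log 2 (q ^ 4) : ℝ) + 1)) := by
            apply mul_le_mul_of_nonneg_left (hvar _) (by positivity)
        _ = 4 * C ^ 2 * ((Nat.log 2 (q ^ 4) : ℝ) + 1) / (q : ℝ) ^ 4 := by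
            rw [hcast]
            field_simp
        _ ≤ 4 * C ^ 2 * (9 * (q : ℝ)) / (q : ℝ) ^ 4 := by
            apply div_le_div_of_nonneg_right ?_ (by positivity)
            · exact mul_le_mul_of_nonneg_left hlog (by positivity)
        _ = 36 * C ^ 2 / (q : ℝ) ^ 3 := by
            field_simp
            ring
  have hsummable : Summable (fun q : ℕ => ∫ x, (Y q x) ^ 2 ∂Ps) := by
    apply Summable.of_nonneg_of_le (fun q => integral_nonneg (fun x => sq_nonneg _)) hEY
    have hs : Summable (fun q : ℕ => 36 * C ^ 2 * (1 / (q : ℝ) ^ 3)) :=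
      (Real.summable_one_div_nat_pow.mpr (by norm_num)).mul_left _
    apply hs.congr
    intro q
    rw [mul_one_div]
  have haeY : ∀ᵐ x ∂Ps, Tendsto (fun q => Y q x) atTop (nhds 0) := by
    have hGm : ∀ q : ℕ, Measurable (fun x => ENNReal.ofReal ((Y q x) ^ 2)) :=
      fun q => (hmY2 q).ennreal_ofReal
    have h2 : ∀ q : ℕ, ∫⁻ x, ENNReal.ofReal ((Y q x) ^ 2) ∂Ps
        = ENNReal.ofReal (∫ x, (Y q x) ^ 2 ∂Ps) := fun q =>
      (ofReal_integral_eq_lintegral_ofReal (hintY2 q) (ae_of_all _ fun x => sq_nonneg _)).symm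
    have h3 : ∫⁻ x, (∑' q : ℕ, ENNReal.ofReal ((Y q x) ^ 2)) ∂Ps ≠ ⊤ := by
      rw [lintegral_tsum (fun q => (hGm q).aemeasurable)]
      simp only [h2]
      rw [← ENNReal.ofReal_tsum_of_nonneg (fun q => integral_nonneg fun x => sq_nonneg _)
        hsummable]
      exact ENNReal.ofReal_ne_top
    have h5 : ∀ᵐ x ∂Ps, (∑' q : ℕ, ENNReal.ofReal ((Y q x) ^ 2)) < ⊤ :=
      ae_lt_top (Measurable.ennreal_tsum hGm) h3
    filter_upwards [h5] with x hx
    have hsx : Summable fun q => (Y q x) ^ 2 := by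
      have h6 := ENNReal.summable_toReal hx.ne
      apply h6.congr
      intro q
      exact ENNReal.toReal_ofReal (sq_nonneg _)
    have h7 : Tendsto (fun q => (Y q x) ^ 2) atTop (nhds 0) := hsx.tendsto_atTop_zero
    have h8 : Tendsto (fun q => |Y q x|) atTop (nhds 0) := by
      have h9 := (Real.continuous_sqrt.tendsto 0).comp h7
      simp only [Function.comp_def, Real.sqrt_zero] at h9
      apply h9.congr
      intro q
      exact Real.sqrt_sq_eq_abs _
    exact squeeze_zero_norm (fun q => le_of_eq (Real.norm_eq_abs _)) h8
  filter_upwards [haeY] with x hx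
  show Tendsto (fun n : ℕ => (n : ℝ)⁻¹ * S n x) atTop (nhds 0)
  set q : ℕ → ℕ := fun n => Nat.sqrt (Nat.sqrt n) with hqdef
  have hqmono : Monotone q := fun a b hab => Nat.sqrt_le_sqrt (Nat.sqrt_le_sqrt hab)
  have hqtend : Tendsto q atTop atTop := by
    rw [Filter.tendsto_atTop_atTop]
    intro b
    refine ⟨(b ^ 2) ^ 2, fun a ha => ?_⟩
    calc b = q ((b ^ 2) ^ 2) := by simp [q, Nat.sqrt_eq']
      _ ≤ q a := hqmono ha
  have hB : Tendsto (fun p : ℕ => |Y p x| + 30 * C / (p : ℝ)) atTop (nhds 0) := by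
    have h1 : Tendsto (fun p : ℕ => |Y p x|) atTop (nhds 0) := by
      have h2 := (continuous_abs.tendsto 0).comp hx
      simpa [Function.comp_def] using h2
    have h2 : Tendsto (fun p : ℕ => 30 * C / (p : ℝ)) atTop (nhds 0) :=
      tendsto_const_div_atTop_nhds_zero_nat _
    simpa using h1.add h2
  have hcomp := hB.comp hqtend
  refine squeeze_zero_norm' ?_ (by simpa [Function.comp_def] using hcomp)
  filter_upwards [Filter.eventually_ge_atTop 1] with n hn
  -- notation
  set p : ℕ := q n with hpdef
  have hp1 : 1 ≤ p := by
    have h1 : 0 < Nat.sqrt n := Nat.sqrt_pos.mpr (by omega)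
    have h2 : 0 < Nat.sqrt (Nat.sqrt n) := Nat.sqrt_pos.mpr h1
    exact h2
  set M : ℕ := p ^ 4 with hMdef
  have hMn : M ≤ n := by
    have e2 : p ^ 2 ≤ Nat.sqrt n := by
      have := Nat.sqrt_le' (Nat.sqrt n)
      simpa [hpdef, hqdef] using this
    have e3 : (p ^ 2) ^ 2 ≤ (Nat.sqrt n) ^ 2 := Nat.pow_le_pow_left e2 2
    have e1 : Nat.sqrt n ^ 2 ≤ n := Nat.sqrt_le' n
    calc M = (p ^ 2) ^ 2 := by rw [hMdef, ← pow_mul]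
      _ ≤ (Nat.sqrt n) ^ 2 := e3
      _ ≤ n := e1
  have hnM : n < (p + 1) ^ 4 := by
    have e1 : n < (Nat.sqrt n + 1) ^ 2 := by
      have := Nat.lt_succ_sqrt' n
      simpa [Nat.succ_eq_add_one] using this
    have e2 : Nat.sqrt n < (p + 1) ^ 2 := by
      have := Nat.lt_succ_sqrt' (Nat.sqrt n)
      simpa [hpdef, hqdef, Nat.succ_eq_add_one] using this
    calc n < (Nat.sqrt n + 1) ^ 2 := e1
      _ ≤ ((p + 1) ^ 2) ^ 2 := Nat.pow_le_pow_left (by omega) 2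
      _ = (p + 1) ^ 4 := by rw [← pow_mul]
  -- real versions
  have hM1 : 1 ≤ M := by
    rw [hMdef]
    exact Nat.one_le_iff_ne_zero.mpr (pow_ne_zero _ (by omega))
  have hrp : (1 : ℝ) ≤ (p : ℝ) := by exact_mod_cast hp1
  have hrM : ((M : ℕ) : ℝ) = (p : ℝ) ^ 4 := by rw [hMdef]; push_cast; ring
  have hrMn : ((M : ℕ) : ℝ) ≤ (n : ℝ) := by exact_mod_cast hMn
  have hrn1 : (1 : ℝ) ≤ (n : ℝ) := by exact_mod_cast hn
  have hrnM : (n : ℝ) ≤ ((p : ℝ) + 1) ^ 4 - 1 := by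
    have : n + 1 ≤ (p + 1) ^ 4 := hnM
    have h2 : ((n : ℝ)) + 1 ≤ (((p + 1) ^ 4 : ℕ) : ℝ) := by exact_mod_cast this
    push_cast at h2
    linarith
  -- decomposition
  have hdiff : S n x - S M x = ∑ k ∈ Ioc M n, X k x := by
    have hIcc : ∀ r : ℕ, Icc 1 r = Ioc 0 r := fun r => rfl
    have hsum2 := Finset.sum_Ioc_consecutive (fun k => X k x) (Nat.zero_le M) hMn
    rw [hSdef]
    simp only [hIcc]
    linarith [hsum2]
  have habs2 : |∑ k ∈ Ioc M n, X k x| ≤ ((n : ℝ) - ((M : ℕ) : ℝ)) * (2 * C) := by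
    calc |∑ k ∈ Ioc M n, X k x| ≤ ∑ k ∈ Ioc M n, |X k x| := Finset.abs_sum_le_sum_abs _ _
      _ ≤ ∑ _k ∈ Ioc M n, 2 * C := Finset.sum_le_sum fun k _ => hbX k x
      _ = ((n - M : ℕ) : ℝ) * (2 * C) := by rw [Finset.sum_const, nsmul_eq_mul, Nat.card_Ioc]
      _ = ((n : ℝ) - ((M : ℕ) : ℝ)) * (2 * C) := by rw [Nat.cast_sub hMn]
  have habs : |S n x| ≤ |S M x| + ((n : ℝ) - ((M : ℕ) : ℝ)) * (2 * C) := by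
    have h1 : S n x = S M x + ∑ k ∈ Ioc M n, X k x := by linarith [hdiff]
    rw [h1]
    calc |S M x + ∑ k ∈ Ioc M n, X k x| ≤ |S M x| + |∑ k ∈ Ioc M n, X k x| := abs_add_le _ _
      _ ≤ |S M x| + ((n : ℝ) - ((M : ℕ) : ℝ)) * (2 * C) := by linarith [habs2]
  have hYp : |Y p x| = |S M x| / (p : ℝ) ^ 4 := by
    rw [hYdef]
    simp only
    rw [← hMdef, abs_mul, abs_inv, abs_of_pos (by rw [hrM]; positivity), hrM]
    rw [div_eq_inv_mul]
  -- main estimate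
  have hrp0 : (0 : ℝ) < (p : ℝ) := by linarith
  have hrn0 : (0 : ℝ) < (n : ℝ) := by linarith
  have hrM0 : (0 : ℝ) < (p : ℝ) ^ 4 := by positivity
  have hgap : (n : ℝ) - ((M : ℕ) : ℝ) ≤ 14 * (p : ℝ) ^ 3 := by
    rw [hrM]
    have e0 : ((p : ℝ) + 1) ^ 4 - 1 = (p : ℝ) ^ 4 + 4 * (p : ℝ) ^ 3 + 6 * (p : ℝ) ^ 2
        + 4 * (p : ℝ) := by ring
    have e1 : (p : ℝ) ^ 2 ≤ (p : ℝ) ^ 3 := by nlinarith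
    have e2 : (p : ℝ) ≤ (p : ℝ) ^ 3 := by nlinarith
    linarith [hrnM]
  have hgap0 : (0 : ℝ) ≤ (n : ℝ) - ((M : ℕ) : ℝ) := by linarith
  rw [Real.norm_eq_abs, abs_mul, abs_inv, abs_of_pos hrn0]
  have ha0 : (0 : ℝ) ≤ |S M x| := abs_nonneg _
  have hinv : ((n : ℝ))⁻¹ ≤ ((p : ℝ) ^ 4)⁻¹ := by
    apply inv_anti₀ hrM0
    rw [← hrM]
    exact hrMn
  have h1 : (n : ℝ)⁻¹ * |S n x|
      ≤ (n : ℝ)⁻¹ * (|S M x| + ((n : ℝ) - ((M : ℕ) : ℝ)) * (2 * C)) :=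
    mul_le_mul_of_nonneg_left habs (by positivity)
  have h2 : (n : ℝ)⁻¹ * (|S M x| + ((n : ℝ) - ((M : ℕ) : ℝ)) * (2 * C))
      ≤ ((p : ℝ) ^ 4)⁻¹ * (|S M x| + ((n : ℝ) - ((M : ℕ) : ℝ)) * (2 * C)) := by
    apply mul_le_mul_of_nonneg_right hinv
    have : (0 : ℝ) ≤ ((n : ℝ) - ((M : ℕ) : ℝ)) * (2 * C) := by
      apply mul_nonneg hgap0
      linarith
    linarith
  have h3 : ((p : ℝ) ^ 4)⁻¹ * (|S M x| + ((n : ℝ) - ((M : ℕ) : ℝ)) * (2 * C))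
      ≤ ((p : ℝ) ^ 4)⁻¹ * (|S M x| + 14 * (p : ℝ) ^ 3 * (2 * C)) := by
    apply mul_le_mul_of_nonneg_left ?_ (by positivity)
    have : ((n : ℝ) - ((M : ℕ) : ℝ)) * (2 * C) ≤ 14 * (p : ℝ) ^ 3 * (2 * C) :=
      mul_le_mul_of_nonneg_right hgap (by linarith)
    linarith
  have h4 : ((p : ℝ) ^ 4)⁻¹ * (|S M x| + 14 * (p : ℝ) ^ 3 * (2 * C))
      = |S M x| / (p : ℝ) ^ 4 + 28 * C / (p : ℝ) := by
    field_simp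
    ring
  have h5 : 28 * C / (p : ℝ) ≤ 30 * C / (p : ℝ) := by
    rw [div_eq_mul_inv, div_eq_mul_inv]
    exact mul_le_mul_of_nonneg_right (by linarith) (by positivity)
  rw [hYp]
  linarith
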